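/- Define Q(S̄) = Q₁(S̄) + β₀‖S̄‖_{2,1} where Q₁ is an arbitrary real-valued function and β₀ > 0, and suppose S̄_new satisfies Q₁(S̄_new) + β₀ Σ_i ‖(S̄_new)_i‖₂²/(2‖S̄_i‖₂) ≤ Q₁(S̄) + β₀ Σ_i ‖S̄_i‖₂²/(2‖S̄_i‖₂), with all rows S̄_i nonzero. Then Q(S̄_new) ≤ Q(S̄). -/

import Mathlib

open Matrix

theorem stmt_13 (b k : ℕ) (Q₁ : Matrix (Fin b) (Fin k) ℝ → ℝ) (β₀ : ℝ) (hβ₀ : 0 < β₀)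
    (Q : Matrix (Fin b) (Fin k) ℝ → ℝ)
    (hQ : Q = fun X => Q₁ X + β₀ * ∑ i, Real.sqrt (∑ j, X i j ^ 2))
    (Sbar Snew : Matrix (Fin b) (Fin k) ℝ)
    (hrows : ∀ i, (fun j => Sbar i j) ≠ 0)
    (hdec : Q₁ Snew + β₀ * ∑ i, (∑ j, Snew i j ^ 2) / (2 * Real.sqrt (∑ j, Sbar i j ^ 2)) ≤
        Q₁ Sbar + β₀ * ∑ i, (∑ j, Sbar i j ^ 2) / (2 * Real.sqrt (∑ j, Sbar i j ^ 2))) :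
    Q Snew ≤ Q Sbar := by
  subst hQ
  simp only
  -- row norms
  set n : Fin b → ℝ := fun i => Real.sqrt (∑ j, Snew i j ^ 2) with hn
  set m : Fin b → ℝ := fun i => Real.sqrt (∑ j, Sbar i j ^ 2) with hm
  have hmpos : ∀ i, 0 < m i := by
    intro i
    apply Real.sqrt_pos.2
    have hnz : ∃ j, Sbar i j ≠ 0 := by
      by_contra h
      push_neg at h
      exact hrows i (funext fun j => h j)
    obtain ⟨j, hj⟩ := hnz
    have : (0:ℝ) < Sbar i j ^ 2 := by positivity
    calc (0:ℝ) < Sbar i j ^ 2 := this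
      _ ≤ ∑ j, Sbar i j ^ 2 :=
        Finset.single_le_sum (f := fun j => Sbar i j ^ 2) (fun j _ => by positivity) (Finset.mem_univ j)
  have hnsq : ∀ i, n i ^ 2 = ∑ j, Snew i j ^ 2 := fun i =>
    Real.sq_sqrt (Finset.sum_nonneg fun j _ => by positivity)
  have hmsq : ∀ i, m i ^ 2 = ∑ j, Sbar i j ^ 2 := fun i =>
    Real.sq_sqrt (Finset.sum_nonneg fun j _ => by positivity)
  have hnnonneg : ∀ i, 0 ≤ n i := fun i => Real.sqrt_nonneg _
  -- key inequality: n i ≤ n i ^2 / (2 m i) + m i / 2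
  have key : ∀ i, n i ≤ (∑ j, Snew i j ^ 2) / (2 * m i) + m i / 2 := by
    intro i
    rw [← hnsq i]
    have hmi := hmpos i
    rw [div_add_div _ _ (by positivity : (2 * m i) ≠ 0) (by norm_num : (2:ℝ) ≠ 0),
      le_div_iff₀ (by positivity)]
    nlinarith [sq_nonneg (n i - m i)]
  have keym : ∀ i, (∑ j, Sbar i j ^ 2) / (2 * m i) = m i / 2 := by
    intro i
    rw [← hmsq i]
    have := (hmpos i).ne'
    field_simp
  have h1 : ∑ i, n i ≤ (∑ i, (∑ j, Snew i j ^ 2) / (2 * m i)) + (∑ i, m i / 2) := by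
    rw [← Finset.sum_add_distrib]
    exact Finset.sum_le_sum fun i _ => key i
  have h2 : ∑ i, (∑ j, Sbar i j ^ 2) / (2 * m i) = ∑ i, m i / 2 :=
    Finset.sum_congr rfl fun i _ => keym i
  have h3 : Q₁ Snew + β₀ * ∑ i, n i ≤
      Q₁ Snew + β₀ * ((∑ i, (∑ j, Snew i j ^ 2) / (2 * m i)) + (∑ i, m i / 2)) := by
    have := mul_le_mul_of_nonneg_left h1 hβ₀.le
    linarith
  have h4 : Q₁ Sbar + β₀ * ∑ i, (∑ j, Sbar i j ^ 2) / (2 * m i) + β₀ * (∑ i, m i / 2) =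
      Q₁ Sbar + β₀ * ∑ i, m i := by
    rw [h2]
    have : ∑ i, m i / 2 + ∑ i, m i / 2 = ∑ i, m i := by
      rw [← Finset.sum_add_distrib]
      exact Finset.sum_congr rfl fun i _ => by ring
    nlinarith [this]
  calc Q₁ Snew + β₀ * ∑ i, n i
      ≤ Q₁ Snew + β₀ * ((∑ i, (∑ j, Snew i j ^ 2) / (2 * m i)) + (∑ i, m i / 2)) := h3
    _ = (Q₁ Snew + β₀ * ∑ i, (∑ j, Snew i j ^ 2) / (2 * m i)) + β₀ * (∑ i, m i / 2) := by ring
    _ ≤ (Q₁ Sbar + β₀ * ∑ i, (∑ j, Sbar i j ^ 2) / (2 * m i)) + β₀ * (∑ i, m i / 2) := by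
        exact add_le_add_left hdec _
    _ = Q₁ Sbar + β₀ * ∑ i, m i := h4
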